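/- Let q ≥ 2 be an integer and let a, b be integers with a ≥ 2 and b ≥ 0. Then φ⁻_{b+1,b+a}(q) ≥ q^(ab + binom(a+1,2)) · (1 + (−1)^b · q^(−b−1) − (−1)^b · q^(−b−2) − q^(−b−3) − q^(−2b−3)). -/

import Mathlib

open Finset

set_option maxHeartbeats 1000000

/-- `φ⁻_{a,b}(q) = ∏_{k=a}^{b} (q^k − (−1)^k)`, the empty product (b = a−1) being 1. -/
def phiMinus (q : ℚ) (a b : ℕ) : ℚ := ∏ k ∈ Finset.Icc a b, (q ^ k - (-1) ^ k)

lemma sumIccAux (b a : ℕ) :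
    ∑ k ∈ Finset.Icc (b + 1) (b + a), k = a * b + (a + 1).choose 2 := by
  induction a with
  | zero => simp
  | succ n ih =>
    rw [show b + (n + 1) = (b + n) + 1 by ring,
      Finset.sum_Icc_succ_top (by omega) (fun k => k), ih,
      show n + 1 + 1 = (n + 1) + 1 by rfl, Nat.choose_succ_succ (n + 1) 1,
      Nat.choose_one_right]
    ring

lemma prodA (Q : ℚ) (hQ : 2 ≤ Q) (m : ℕ) (hm : Odd m) (n : ℕ) :
    (∏ k ∈ Finset.Icc m n, (Q ^ k - (-1) ^ k)) ≥ Q ^ (∑ k ∈ Finset.Icc m n, k) ∧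
      (Odd n → m ≤ n →
        (∏ k ∈ Finset.Icc m n, (Q ^ k - (-1) ^ k)) ≥
          Q ^ (∑ k ∈ Finset.Icc m n, k) + Q ^ ((∑ k ∈ Finset.Icc m n, k) - n)) := by
  have hQ0 : (0:ℚ) < Q := by linarith
  have hQ1 : (1:ℚ) ≤ Q := by linarith
  induction n with
  | zero =>
    have hm1 : 1 ≤ m := hm.pos
    rw [Finset.Icc_eq_empty (by omega)]
    simp
  | succ n ih =>
    by_cases h : m ≤ n + 1
    · by_cases h2 : m = n + 1
      · subst h2
        rw [Finset.Icc_self, Finset.prod_singleton, Finset.sum_singleton,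
          hm.neg_one_pow]
        constructor
        · have : (0:ℚ) < Q ^ (n + 1) := pow_pos hQ0 (n + 1)
          linarith
        · intro _ _
          simp
      · have h3 : m ≤ n := by omega
        rw [Finset.prod_Icc_succ_top h, Finset.sum_Icc_succ_top h (fun k => k)]
        have hSn : n ≤ ∑ k ∈ Finset.Icc m n, k :=
          Finset.single_le_sum (f := fun k => k) (fun i _ => Nat.zero_le i)
            (Finset.mem_Icc.mpr ⟨h3, le_refl n⟩)
        set S := ∑ k ∈ Finset.Icc m n, k with hS
        set P := ∏ k ∈ Finset.Icc m n, (Q ^ k - (-1) ^ k) with hP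
        rcases Nat.even_or_odd n with hn | hn
        · -- n even, n+1 odd
          have hsign : ((-1:ℚ)) ^ (n + 1) = -1 := by
            rw [pow_succ, hn.neg_one_pow]; ring
          rw [hsign]
          have hIH : P ≥ Q ^ S := ih.1
          have hfac : (0:ℚ) < Q ^ (n + 1) + 1 := by positivity
          have key : P * (Q ^ (n + 1) - -1) ≥ Q ^ S * (Q ^ (n + 1) + 1) := by
            have := mul_le_mul_of_nonneg_right hIH (le_of_lt hfac)
            calc Q ^ S * (Q ^ (n + 1) + 1) ≤ P * (Q ^ (n + 1) + 1) := this
              _ = P * (Q ^ (n + 1) - -1) := by ring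
          have hexp : Q ^ S * (Q ^ (n + 1) + 1) = Q ^ (S + (n + 1)) + Q ^ S := by
            rw [pow_add]; ring
          constructor
          · have : (0:ℚ) < Q ^ S := pow_pos hQ0 S
            linarith [key, hexp.ge]
          · intro _ _
            have hsub : S + (n + 1) - (n + 1) = S := by omega
            rw [hsub]
            linarith [key, hexp.ge]
        · -- n odd, n+1 even
          have hsign : ((-1:ℚ)) ^ (n + 1) = 1 := by
            rw [pow_succ, hn.neg_one_pow]; ring
          rw [hsign]
          have hIH : P ≥ Q ^ S + Q ^ (S - n) := ih.2 hn h3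
          obtain ⟨t, ht⟩ : ∃ t, S = n + t := ⟨S - n, by omega⟩
          have hst : S - n = t := by omega
          have hfac : (0:ℚ) ≤ Q ^ (n + 1) - 1 := by
            have : (1:ℚ) ≤ Q ^ (n + 1) := one_le_pow₀ hQ1
            linarith
          have key : P * (Q ^ (n + 1) - 1) ≥
              (Q ^ S + Q ^ (S - n)) * (Q ^ (n + 1) - 1) :=
            mul_le_mul_of_nonneg_right hIH hfac
          have h1 : Q ^ t * Q ^ n * Q ≥ Q ^ t * Q ^ n + Q ^ t := by
            have hA : (0:ℚ) < Q ^ t := pow_pos hQ0 t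
            have hB : (1:ℚ) ≤ Q ^ n := one_le_pow₀ hQ1
            nlinarith [mul_pos hA (pow_pos hQ0 n), mul_le_mul_of_nonneg_left hB hA.le]
          have halg : (Q ^ S + Q ^ (S - n)) * (Q ^ (n + 1) - 1) ≥ Q ^ (S + (n + 1)) := by
            rw [hst, ht, pow_add Q (n + t) (n + 1), pow_add Q n t, pow_succ Q n]
            nlinarith [h1, pow_pos hQ0 t, pow_pos hQ0 n]
          constructor
          · linarith
          · intro hodd _
            exfalso
            rcases hodd with ⟨j, hj⟩
            rcases hn with ⟨i, hi⟩
            omega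
    · rw [Finset.Icc_eq_empty (show ¬ m ≤ n + 1 from h)]
      constructor
      · simp
      · intro _ hle
        exact absurd hle h

lemma prodB (Q : ℚ) (hQ : 2 ≤ Q) (m : ℕ) (hm : Even m) (n : ℕ) (hmn : m ≤ n) :
    (∏ k ∈ Finset.Icc m n, (Q ^ k - (-1) ^ k)) ≥
      Q ^ (∑ k ∈ Finset.Icc m n, k) - Q ^ ((∑ k ∈ Finset.Icc m n, k) - m) := by
  have hQ0 : (0:ℚ) < Q := by linarith
  have hQ1 : (1:ℚ) ≤ Q := by linarith
  have hins := Finset.insert_Icc_add_one_left_eq_Icc hmn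
  have hnot : m ∉ Finset.Icc (m + 1) n := by simp
  rw [← hins, Finset.prod_insert hnot, Finset.sum_insert hnot]
  have hodd : Odd (m + 1) := Even.add_one hm
  have hA := (prodA Q hQ (m + 1) hodd n).1
  set S' := ∑ k ∈ Finset.Icc (m + 1) n, k with hS'
  have hsub : m + S' - m = S' := by omega
  rw [hsub, hm.neg_one_pow, pow_add]
  have hfac : (0:ℚ) ≤ Q ^ m - 1 := by
    have : (1:ℚ) ≤ Q ^ m := one_le_pow₀ hQ1
    linarith
  have hT0 : (0:ℚ) ≤ Q ^ S' := (pow_pos hQ0 S').le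
  nlinarith [mul_le_mul_of_nonneg_left hA hfac]

theorem phiMinus_lower_bound (q a b : ℕ) (hq : 2 ≤ q) (ha : 2 ≤ a) :
    phiMinus (q : ℚ) (b + 1) (b + a) ≥
      (q : ℚ) ^ (a * b + (a + 1).choose 2) *
        (1 + (-1 : ℚ) ^ b * (q : ℚ) ^ (-(b : ℤ) - 1) -
          (-1 : ℚ) ^ b * (q : ℚ) ^ (-(b : ℤ) - 2) -
          (q : ℚ) ^ (-(b : ℤ) - 3) - (q : ℚ) ^ (-2 * (b : ℤ) - 3)) := by
  have hQ : (2:ℚ) ≤ (q:ℚ) := by exact_mod_cast hq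
  have hQ0 : (0:ℚ) < (q:ℚ) := by linarith
  have hQne : (q:ℚ) ≠ 0 := ne_of_gt hQ0
  have hQ1 : (1:ℚ) ≤ (q:ℚ) := by linarith
  have hx0 : (0:ℚ) < (q:ℚ) ^ b := pow_pos hQ0 b
  have hxne : ((q:ℚ) ^ b) ≠ 0 := ne_of_gt hx0
  have hx1 : (1:ℚ) ≤ (q:ℚ) ^ b := one_le_pow₀ hQ1
  have h1 : b + 1 ≤ b + a := by omega
  have h2 : b + 2 ≤ b + a := by omega
  have e1 : Finset.Icc (b+1) (b+a) = insert (b+1) (Finset.Icc (b+2) (b+a)) := by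
    rw [show b+2 = (b+1)+1 from rfl, Finset.insert_Icc_add_one_left_eq_Icc h1]
  have e2 : Finset.Icc (b+2) (b+a) = insert (b+2) (Finset.Icc (b+3) (b+a)) := by
    rw [show b+3 = (b+2)+1 from rfl, Finset.insert_Icc_add_one_left_eq_Icc h2]
  set T := ∏ k ∈ Finset.Icc (b+3) (b+a), ((q:ℚ) ^ k - (-1) ^ k) with hT'
  have hsplit : phiMinus (q:ℚ) (b+1) (b+a)
      = ((q:ℚ)^(b+1) - (-1)^(b+1)) * (((q:ℚ)^(b+2) - (-1)^(b+2)) * T) := by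
    unfold phiMinus
    rw [e1, Finset.prod_insert (by simp), e2, Finset.prod_insert (by simp)]
  set s2 := ∑ k ∈ Finset.Icc (b+3) (b+a), k with hs2
  have hy0 : (0:ℚ) < (q:ℚ) ^ s2 := pow_pos hQ0 s2
  have hsum : a * b + (a+1).choose 2 = (2*b+3) + s2 := by
    have h := sumIccAux b a
    rw [e1, Finset.sum_insert (by simp), e2, Finset.sum_insert (by simp)] at h
    omega
  have z1 : (q:ℚ) ^ (-(b:ℤ) - 1) = ((q:ℚ) ^ (b+1))⁻¹ := by
    rw [show -(b:ℤ) - 1 = -(((b+1 : ℕ)) : ℤ) by push_cast; ring, zpow_neg, zpow_natCast]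
  have z2 : (q:ℚ) ^ (-(b:ℤ) - 2) = ((q:ℚ) ^ (b+2))⁻¹ := by
    rw [show -(b:ℤ) - 2 = -(((b+2 : ℕ)) : ℤ) by push_cast; ring, zpow_neg, zpow_natCast]
  have z3 : (q:ℚ) ^ (-(b:ℤ) - 3) = ((q:ℚ) ^ (b+3))⁻¹ := by
    rw [show -(b:ℤ) - 3 = -(((b+3 : ℕ)) : ℤ) by push_cast; ring, zpow_neg, zpow_natCast]
  have z4 : (q:ℚ) ^ (-2 * (b:ℤ) - 3) = ((q:ℚ) ^ (2*b+3))⁻¹ := by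
    rw [show -2 * (b:ℤ) - 3 = -(((2*b+3 : ℕ)) : ℤ) by push_cast; ring, zpow_neg, zpow_natCast]
  have p1 : (q:ℚ)^(b+1) = (q:ℚ)^b * (q:ℚ) := pow_succ _ b
  have p2 : (q:ℚ)^(b+2) = (q:ℚ)^b * (q:ℚ)^2 := pow_add _ b 2
  have p3 : (q:ℚ)^(b+3) = (q:ℚ)^b * (q:ℚ)^3 := pow_add _ b 3
  have p4 : (q:ℚ)^(2*b+3) = (q:ℚ)^b * (q:ℚ)^b * (q:ℚ)^3 := by
    rw [show 2*b+3 = b + (b+3) by ring, pow_add, p3]; ring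
  rw [hsplit, hsum, pow_add (q:ℚ) (2*b+3) s2, ge_iff_le]
  rcases Nat.even_or_odd b with hb | hb
  · -- b even
    have s0 : ((-1:ℚ))^b = 1 := hb.neg_one_pow
    have s1 : ((-1:ℚ))^(b+1) = -1 := by rw [pow_succ, s0]; ring
    have s2' : ((-1:ℚ))^(b+2) = 1 := by rw [pow_add, s0]; norm_num
    have hodd3 : Odd (b+3) := by rcases hb with ⟨c, hc⟩; exact ⟨c+1, by omega⟩
    have hT : T ≥ (q:ℚ) ^ s2 := (prodA (q:ℚ) hQ (b+3) hodd3 (b+a)).1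
    calc (q:ℚ)^(2*b+3) * (q:ℚ)^s2 *
          (1 + (-1:ℚ)^b * (q:ℚ) ^ (-(b:ℤ) - 1) - (-1:ℚ)^b * (q:ℚ) ^ (-(b:ℤ) - 2)
            - (q:ℚ) ^ (-(b:ℤ) - 3) - (q:ℚ) ^ (-2 * (b:ℤ) - 3))
        = (q:ℚ)^s2 * ((q:ℚ)^b * (q:ℚ)^b * (q:ℚ)^3 + (q:ℚ)^b * (q:ℚ)^2
            - (q:ℚ)^b * (q:ℚ) - (q:ℚ)^b - 1) := by
          rw [z1, z2, z3, z4, s0, p1, p2, p3, p4]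
          field_simp
      _ ≤ ((q:ℚ)^(b+1) - (-1)^(b+1)) * (((q:ℚ)^(b+2) - (-1)^(b+2)) * T) := by
          rw [s1, s2', p1, p2]
          have hb2 : (0:ℚ) ≤ (q:ℚ)^b * (q:ℚ)^2 - 1 := by nlinarith
          have st1 : ((q:ℚ)^b * (q:ℚ)^2 - 1) * ((q:ℚ)^s2)
              ≤ ((q:ℚ)^b * (q:ℚ)^2 - 1) * T := mul_le_mul_of_nonneg_left hT hb2
          have hb3 : (0:ℚ) ≤ (q:ℚ)^b * (q:ℚ) + 1 := by positivity
          have st2 : ((q:ℚ)^b * (q:ℚ) + 1) * (((q:ℚ)^b * (q:ℚ)^2 - 1) * ((q:ℚ)^s2))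
              ≤ ((q:ℚ)^b * (q:ℚ) + 1) * (((q:ℚ)^b * (q:ℚ)^2 - 1) * T) :=
            mul_le_mul_of_nonneg_left st1 hb3
          nlinarith [st2, mul_pos hy0 hx0]
  · -- b odd
    have s0 : ((-1:ℚ))^b = -1 := hb.neg_one_pow
    have s1 : ((-1:ℚ))^(b+1) = 1 := by rw [pow_succ, s0]; ring
    have s2' : ((-1:ℚ))^(b+2) = -1 := by rw [pow_add, s0]; norm_num
    have hstep1 : (q:ℚ)^(2*b+3) * (q:ℚ)^s2 *
          (1 + (-1:ℚ)^b * (q:ℚ) ^ (-(b:ℤ) - 1) - (-1:ℚ)^b * (q:ℚ) ^ (-(b:ℤ) - 2)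
            - (q:ℚ) ^ (-(b:ℤ) - 3) - (q:ℚ) ^ (-2 * (b:ℤ) - 3))
        = (q:ℚ)^s2 * ((q:ℚ)^b * (q:ℚ)^b * (q:ℚ)^3 - (q:ℚ)^b * (q:ℚ)^2
            + (q:ℚ)^b * (q:ℚ) - (q:ℚ)^b - 1) := by
      rw [z1, z2, z3, z4, s0, p1, p2, p3, p4]
      field_simp
      ring
    rw [hstep1, s1, s2', p1, p2]
    have hb5 : (0:ℚ) ≤ (q:ℚ)^b * (q:ℚ) - 1 := by nlinarith
    have hb4 : (0:ℚ) ≤ (q:ℚ)^b * (q:ℚ)^2 + 1 := by positivity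
    by_cases ha3 : 3 ≤ a
    · have heven3 : Even (b+3) := by rcases hb with ⟨c, hc⟩; exact ⟨c+2, by omega⟩
      have hmn : b+3 ≤ b+a := by omega
      have hT := prodB (q:ℚ) hQ (b+3) heven3 (b+a) hmn
      have hs2b : b+3 ≤ s2 :=
        Finset.single_le_sum (f := fun k => k) (fun i _ => Nat.zero_le i)
          (Finset.mem_Icc.mpr ⟨le_refl _, hmn⟩)
      obtain ⟨t, ht⟩ : ∃ t, s2 = t + (b+3) := ⟨s2 - (b+3), by omega⟩
      have hsub : s2 - (b+3) = t := by omega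
      rw [← hs2, hsub] at hT
      have hz0 : (0:ℚ) < (q:ℚ)^t := pow_pos hQ0 t
      have hys : (q:ℚ)^s2 = (q:ℚ)^t * ((q:ℚ)^b * (q:ℚ)^3) := by
        rw [ht, pow_add, p3]
      have st1 : ((q:ℚ)^b * (q:ℚ)^2 + 1) * ((q:ℚ)^s2 - (q:ℚ)^t)
          ≤ ((q:ℚ)^b * (q:ℚ)^2 + 1) * T := mul_le_mul_of_nonneg_left hT hb4
      have st2 : ((q:ℚ)^b * (q:ℚ) - 1) * (((q:ℚ)^b * (q:ℚ)^2 + 1) * ((q:ℚ)^s2 - (q:ℚ)^t))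
          ≤ ((q:ℚ)^b * (q:ℚ) - 1) * (((q:ℚ)^b * (q:ℚ)^2 + 1) * T) :=
        mul_le_mul_of_nonneg_left st1 hb5
      rw [hys] at st2 ⊢
      have hpos : (0:ℚ) < (q:ℚ)^b * (q:ℚ)^2 - (q:ℚ)^b * (q:ℚ) + 1 := by
        nlinarith [mul_pos hx0 hQ0]
      nlinarith [st2, mul_pos hz0 hpos]
    · have ha2 : a = 2 := by omega
      have hTe : T = 1 := by
        rw [hT', Finset.Icc_eq_empty (by omega), Finset.prod_empty]
      have hs20 : s2 = 0 := by
        rw [hs2, Finset.Icc_eq_empty (by omega), Finset.sum_empty]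
      rw [hTe, hs20]
      nlinarith [hx0, hx1, hQ]
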